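/- With the attitude error R_e = R·R_dᵀ, gain K_R = diag(k₁,k₂,k₃), error vector e_R = skew(K_R·R_e)^∨, and velocity error e_ω = ω − ω_d, the time derivative of e_R satisfies ė_R = E(K_R, R_e)·e_ω where E(K_R, R_e) = (1/2)·(tr(K_R·R_e)·I − R_eᵀ·K_R)·R_d. -/

import Mathlib

open Matrix

noncomputable section

/-- The special orthogonal group SO(3) as a set of real 3×3 matrices. -/
def SO3 : Set (Matrix (Fin 3) (Fin 3) ℝ) := {R | Rᵀ * R = 1 ∧ R.det = 1}

/-- The hat map: hat(x)·y = x × y. -/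
def hat (x : Fin 3 → ℝ) : Matrix (Fin 3) (Fin 3) ℝ :=
  !![0, -x 2, x 1; x 2, 0, -x 0; -x 1, x 0, 0]

/-- The vee map, inverse of hat on skew-symmetric matrices. -/
def vee (A : Matrix (Fin 3) (Fin 3) ℝ) : Fin 3 → ℝ := ![A 2 1, A 0 2, A 1 0]

/-- Skew-symmetric part of a matrix. -/
def skew (A : Matrix (Fin 3) (Fin 3) ℝ) : Matrix (Fin 3) (Fin 3) ℝ := (1/2 : ℝ) • (A - Aᵀ)

/-- Euclidean norm on ℝ³. -/
def norm3 (x : Fin 3 → ℝ) : ℝ := Real.sqrt (∑ i, x i ^ 2)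

/-- Error navigation function Ψ(R) = ½ tr(K (I − R)). -/
def Psi (K R : Matrix (Fin 3) (Fin 3) ℝ) : ℝ := (1/2) * (K * (1 - R)).trace

set_option maxHeartbeats 1000000

lemma hat_transpose (x : Fin 3 → ℝ) : (hat x)ᵀ = -(hat x) := by
  ext i j; fin_cases i <;> fin_cases j <;> simp [hat]

lemma hat_sub (x y : Fin 3 → ℝ) : hat (x - y) = hat x - hat y := by
  ext i j; fin_cases i <;> fin_cases j <;> simp [hat] <;> ring

lemma conj_hat (Q : Matrix (Fin 3) (Fin 3) ℝ) (h1 : Qᵀ * Q = 1) (hdet : Q.det = 1)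
    (e : Fin 3 → ℝ) : Q * hat e * Qᵀ = hat (Q.mulVec e) := by
  have h2 : Q * Qᵀ = 1 := mul_eq_one_comm.mp h1
  have hadj : Q.adjugate = Qᵀ := by
    calc Q.adjugate = Q.adjugate * (Q * Qᵀ) := by rw [h2, mul_one]
    _ = (Q.adjugate * Q) * Qᵀ := by rw [← mul_assoc]
    _ = Qᵀ := by rw [Matrix.adjugate_mul, hdet, one_smul, one_mul]
  have g : ∀ i j : Fin 3, (!![Q 1 1 * Q 2 2 - Q 1 2 * Q 2 1,
      -(Q 0 1 * Q 2 2) + Q 0 2 * Q 2 1,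
      Q 0 1 * Q 1 2 - Q 0 2 * Q 1 1;
      -(Q 1 0 * Q 2 2) + Q 1 2 * Q 2 0,
      Q 0 0 * Q 2 2 - Q 0 2 * Q 2 0,
      -(Q 0 0 * Q 1 2) + Q 0 2 * Q 1 0;
      Q 1 0 * Q 2 1 - Q 1 1 * Q 2 0,
      -(Q 0 0 * Q 2 1) + Q 0 1 * Q 2 0,
      Q 0 0 * Q 1 1 - Q 0 1 * Q 1 0] : Matrix (Fin 3) (Fin 3) ℝ) i j = Q j i := by
    intro i j; rw [← Matrix.adjugate_fin_three Q, hadj]; rfl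
  have h00 := g 0 0; have h01 := g 1 0; have h02 := g 2 0
  have h10 := g 0 1; have h11 := g 1 1; have h12 := g 2 1
  have h20 := g 0 2; have h21 := g 1 2; have h22 := g 2 2
  simp at h00 h01 h02 h10 h11 h12 h20 h21 h22
  ext i j
  fin_cases i <;> fin_cases j <;>
    simp only [Matrix.mul_apply, Matrix.transpose_apply, Fin.sum_univ_three, Matrix.mulVec,
      dotProduct]
  all_goals simp [hat, Matrix.mulVec, dotProduct, Fin.sum_univ_three]
  all_goals try ring
  · linear_combination (-(e 0)) * h20 + (-(e 1)) * h21 + (-(e 2)) * h22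
  · linear_combination (e 0) * h10 + (e 1) * h11 + (e 2) * h12
  · linear_combination (e 0) * h20 + (e 1) * h21 + (e 2) * h22
  · linear_combination (-(e 0)) * h00 + (-(e 1)) * h01 + (-(e 2)) * h02
  · linear_combination (-(e 0)) * h10 + (-(e 1)) * h11 + (-(e 2)) * h12
  · linear_combination (e 0) * h00 + (e 1) * h01 + (e 2) * h02

lemma vee_skew_mul_hat (B : Matrix (Fin 3) (Fin 3) ℝ) (x : Fin 3 → ℝ) (i : Fin 3) :
    vee (skew (B * hat x)) i =
      (((1/2 : ℝ) • (B.trace • (1 : Matrix (Fin 3) (Fin 3) ℝ) - Bᵀ)).mulVec x) i := by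
  fin_cases i <;>
  · simp only [vee, skew, Matrix.smul_apply, Matrix.sub_apply, Matrix.transpose_apply,
      Matrix.cons_val_zero, Matrix.cons_val_one, Matrix.head_cons, Matrix.cons_val_two,
      Matrix.tail_cons, smul_eq_mul, Matrix.mulVec, dotProduct, Fin.sum_univ_three,
      Matrix.mul_apply, Matrix.trace, Matrix.diag, Matrix.one_apply]
    simp [hat]
    ring

/-- ė_R = E(K_R, R_e)·e_ω with E(K_R,R_e) = ½(tr(K_R R_e)I − R_eᵀK_R)R_d. -/
theorem stmt_5 (k₁ k₂ k₃ : ℝ) (hk₁ : 0 < k₁) (hk₂ : 0 < k₂) (hk₃ : 0 < k₃)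
    (R Rd : ℝ → Matrix (Fin 3) (Fin 3) ℝ) (ω ωd : ℝ → Fin 3 → ℝ) (t : ℝ)
    (hR : ∀ s, R s ∈ SO3) (hRd : ∀ s, Rd s ∈ SO3)
    (hdR : ∀ s (i j : Fin 3), HasDerivAt (fun u => R u i j) ((R s * hat (ω s)) i j) s)
    (hdRd : ∀ s (i j : Fin 3), HasDerivAt (fun u => Rd u i j) ((Rd s * hat (ωd s)) i j) s) :
    ∀ i : Fin 3,
      HasDerivAt
        (fun s => vee (skew (Matrix.diagonal ![k₁, k₂, k₃] * (R s * (Rd s)ᵀ))) i)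
        ((((1/2 : ℝ) •
            ((Matrix.diagonal ![k₁, k₂, k₃] * (R t * (Rd t)ᵀ)).trace •
                (1 : Matrix (Fin 3) (Fin 3) ℝ) -
              (R t * (Rd t)ᵀ)ᵀ * Matrix.diagonal ![k₁, k₂, k₃]) * Rd t).mulVec
          (ω t - ωd t)) i) t := by
  set K : Matrix (Fin 3) (Fin 3) ℝ := Matrix.diagonal ![k₁, k₂, k₃] with hK
  set e : Fin 3 → ℝ := ω t - ωd t with he
  set M' : Matrix (Fin 3) (Fin 3) ℝ := R t * hat e * (Rd t)ᵀ with hM'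
  -- derivative of each entry of R s * (Rd s)ᵀ
  have hM : ∀ i j : Fin 3, HasDerivAt (fun s => (R s * (Rd s)ᵀ) i j) (M' i j) t := by
    intro i j
    have h := (((hdR t i 0).mul (hdRd t j 0)).add ((hdR t i 1).mul (hdRd t j 1))).add
      ((hdR t i 2).mul (hdRd t j 2))
    have hfun : (fun s => (R s * (Rd s)ᵀ) i j) =
        fun s => (R s i 0 * Rd s j 0 + R s i 1 * Rd s j 1) + R s i 2 * Rd s j 2 := by
      funext s
      simp [Matrix.mul_apply, Matrix.transpose_apply, Fin.sum_univ_three, add_assoc]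
    rw [hfun]
    refine h.congr_deriv ?_
    have heq : M' = (R t * hat (ω t)) * (Rd t)ᵀ + R t * (Rd t * hat (ωd t))ᵀ := by
      rw [hM', he, hat_sub, Matrix.transpose_mul, hat_transpose]
      noncomm_ring
    rw [heq]
    simp [Matrix.mul_apply, Matrix.transpose_apply, Fin.sum_univ_three, Matrix.add_apply]
    ring
  -- derivative of each entry of K * (R s * (Rd s)ᵀ)
  have hD : ∀ i j : Fin 3, HasDerivAt (fun s => (K * (R s * (Rd s)ᵀ)) i j)
      ((K * M') i j) t := by
    intro i j
    have hfun : (fun s => (K * (R s * (Rd s)ᵀ)) i j) =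
        fun s => ![k₁, k₂, k₃] i * (R s * (Rd s)ᵀ) i j := by
      funext s; rw [hK]; simp [Matrix.diagonal_mul]
    rw [hfun, hK]
    simpa [Matrix.diagonal_mul] using (hM i j).const_mul (![k₁, k₂, k₃] i)
  -- the claimed derivative value equals vee (skew (K * M')) i
  have key : ∀ i : Fin 3,
      (((1/2 : ℝ) • ((K * (R t * (Rd t)ᵀ)).trace • (1 : Matrix (Fin 3) (Fin 3) ℝ) -
        (R t * (Rd t)ᵀ)ᵀ * K) * Rd t).mulVec e) i = vee (skew (K * M')) i := by
    intro i
    have h1 := (hRd t).1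
    have hdet := (hRd t).2
    have hconj := conj_hat (Rd t) h1 hdet e
    have hKM' : K * M' = (K * (R t * (Rd t)ᵀ)) * hat ((Rd t).mulVec e) := by
      rw [hM', ← hconj]
      have : R t * hat e * (Rd t)ᵀ = (R t * (Rd t)ᵀ) * (Rd t * hat e * (Rd t)ᵀ) := by
        have h2 : (Rd t)ᵀ * Rd t = 1 := h1
        calc R t * hat e * (Rd t)ᵀ = R t * ((Rd t)ᵀ * Rd t) * hat e * (Rd t)ᵀ := by
              rw [h2, mul_one]
          _ = (R t * (Rd t)ᵀ) * (Rd t * hat e * (Rd t)ᵀ) := by noncomm_ring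
      rw [this, ← mul_assoc]
    rw [hKM', vee_skew_mul_hat]
    have htr : (R t * (Rd t)ᵀ)ᵀ * K = (K * (R t * (Rd t)ᵀ))ᵀ := by
      rw [Matrix.transpose_mul K (R t * (Rd t)ᵀ), hK, Matrix.diagonal_transpose]
    rw [htr, ← Matrix.mulVec_mulVec]
  intro i
  fin_cases i
  · have hval : (((1/2 : ℝ) • ((K * (R t * (Rd t)ᵀ)).trace • (1 : Matrix (Fin 3) (Fin 3) ℝ) -
        (R t * (Rd t)ᵀ)ᵀ * K) * Rd t).mulVec e) 0 =
        (1/2 : ℝ) * ((K * M') 2 1 - (K * M') 1 2) := by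
      rw [key 0]
      simp only [vee, skew, Matrix.smul_apply, Matrix.sub_apply, Matrix.transpose_apply,
        smul_eq_mul, Matrix.cons_val_zero, Matrix.cons_val_one, Matrix.cons_val_two,
        Matrix.head_cons, Matrix.tail_cons, Fin.isValue]
      try ring
    have h := ((hD 2 1).sub (hD 1 2)).const_mul ((1:ℝ)/2)
    have hfun : (fun s => vee (skew (K * (R s * (Rd s)ᵀ))) (0 : Fin 3)) =
        fun s => (1/2 : ℝ) * ((K * (R s * (Rd s)ᵀ)) 2 1 - (K * (R s * (Rd s)ᵀ)) 1 2) := by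
      funext s
      simp only [vee, skew, Matrix.smul_apply, Matrix.sub_apply, Matrix.transpose_apply,
        smul_eq_mul, Matrix.cons_val_zero, Matrix.cons_val_one, Matrix.cons_val_two,
        Matrix.head_cons, Matrix.tail_cons, Fin.isValue]
      try ring
    have h' : HasDerivAt (fun s => vee (skew (K * (R s * (Rd s)ᵀ))) (0 : Fin 3))
        ((((1/2 : ℝ) • ((K * (R t * (Rd t)ᵀ)).trace • (1 : Matrix (Fin 3) (Fin 3) ℝ) -
          (R t * (Rd t)ᵀ)ᵀ * K) * Rd t).mulVec e) (0 : Fin 3)) t := by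
      rw [hfun, hval]; exact h
    exact h'
  · have hval : (((1/2 : ℝ) • ((K * (R t * (Rd t)ᵀ)).trace • (1 : Matrix (Fin 3) (Fin 3) ℝ) -
        (R t * (Rd t)ᵀ)ᵀ * K) * Rd t).mulVec e) 1 =
        (1/2 : ℝ) * ((K * M') 0 2 - (K * M') 2 0) := by
      rw [key 1]
      simp only [vee, skew, Matrix.smul_apply, Matrix.sub_apply, Matrix.transpose_apply,
        smul_eq_mul, Matrix.cons_val_zero, Matrix.cons_val_one, Matrix.cons_val_two,
        Matrix.head_cons, Matrix.tail_cons, Fin.isValue]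
      try ring
    have h := ((hD 0 2).sub (hD 2 0)).const_mul ((1:ℝ)/2)
    have hfun : (fun s => vee (skew (K * (R s * (Rd s)ᵀ))) (1 : Fin 3)) =
        fun s => (1/2 : ℝ) * ((K * (R s * (Rd s)ᵀ)) 0 2 - (K * (R s * (Rd s)ᵀ)) 2 0) := by
      funext s
      simp only [vee, skew, Matrix.smul_apply, Matrix.sub_apply, Matrix.transpose_apply,
        smul_eq_mul, Matrix.cons_val_zero, Matrix.cons_val_one, Matrix.cons_val_two,
        Matrix.head_cons, Matrix.tail_cons, Fin.isValue]
      try ring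
    have h' : HasDerivAt (fun s => vee (skew (K * (R s * (Rd s)ᵀ))) (1 : Fin 3))
        ((((1/2 : ℝ) • ((K * (R t * (Rd t)ᵀ)).trace • (1 : Matrix (Fin 3) (Fin 3) ℝ) -
          (R t * (Rd t)ᵀ)ᵀ * K) * Rd t).mulVec e) (1 : Fin 3)) t := by
      rw [hfun, hval]; exact h
    exact h'
  · have hval : (((1/2 : ℝ) • ((K * (R t * (Rd t)ᵀ)).trace • (1 : Matrix (Fin 3) (Fin 3) ℝ) -
        (R t * (Rd t)ᵀ)ᵀ * K) * Rd t).mulVec e) 2 =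
        (1/2 : ℝ) * ((K * M') 1 0 - (K * M') 0 1) := by
      rw [key 2]
      simp only [vee, skew, Matrix.smul_apply, Matrix.sub_apply, Matrix.transpose_apply,
        smul_eq_mul, Matrix.cons_val_zero, Matrix.cons_val_one, Matrix.cons_val_two,
        Matrix.head_cons, Matrix.tail_cons, Fin.isValue]
      try ring
    have h := ((hD 1 0).sub (hD 0 1)).const_mul ((1:ℝ)/2)
    have hfun : (fun s => vee (skew (K * (R s * (Rd s)ᵀ))) (2 : Fin 3)) =
        fun s => (1/2 : ℝ) * ((K * (R s * (Rd s)ᵀ)) 1 0 - (K * (R s * (Rd s)ᵀ)) 0 1) := by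
      funext s
      simp only [vee, skew, Matrix.smul_apply, Matrix.sub_apply, Matrix.transpose_apply,
        smul_eq_mul, Matrix.cons_val_zero, Matrix.cons_val_one, Matrix.cons_val_two,
        Matrix.head_cons, Matrix.tail_cons, Fin.isValue]
      try ring
    have h' : HasDerivAt (fun s => vee (skew (K * (R s * (Rd s)ᵀ))) (2 : Fin 3))
        ((((1/2 : ℝ) • ((K * (R t * (Rd t)ᵀ)).trace • (1 : Matrix (Fin 3) (Fin 3) ℝ) -
          (R t * (Rd t)ᵀ)ᵀ * K) * Rd t).mulVec e) (2 : Fin 3)) t := by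
      rw [hfun, hval]; exact h
    exact h'
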